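/- Fix a sign ε ∈ {1, -1}, and let A : ℝ² → Matrix (Fin 2) (Fin 2) ℝ be A(x₁,x₂) = !![x₁, 0; 0, ε*x₁^2 + x₂^3]. Suppose Φ : ℝ² → ℝ² is smooth on a neighborhood of 0 with Φ(0) = 0 and fderiv ℝ Φ 0 invertible, and X : ℝ² → Matrix (Fin 2) (Fin 2) ℝ is smooth on that neighborhood with X x invertible there, such that A(Φ x) = (X x)ᵀ * A x * (X x) for all x in the neighborhood. Then det (fderiv ℝ Φ 0) > 0, i.e., Φ preserves the orientation of ℝ². -/

import Mathlib

attribute [local instance] Matrix.normedAddCommGroup Matrix.normedSpace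

open scoped Matrix
open Filter Topology

private lemma det_prod_formula_c10 (L : (ℝ × ℝ) →ₗ[ℝ] (ℝ × ℝ)) :
    LinearMap.det L = (L (1,0)).1 * (L (0,1)).2 - (L (0,1)).1 * (L (1,0)).2 := by
  rw [← LinearMap.det_toMatrix (Module.Basis.finTwoProd ℝ), Matrix.det_fin_two]
  simp [LinearMap.toMatrix_apply, Module.Basis.coe_finTwoProd_repr, Module.Basis.finTwoProd_zero,
    Module.Basis.finTwoProd_one]

private lemma det_ne_zero_c10 (L : (ℝ×ℝ) →L[ℝ] (ℝ×ℝ)) (h : IsUnit L) :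
    LinearMap.det (L : (ℝ×ℝ) →ₗ[ℝ] (ℝ×ℝ)) ≠ 0 := by
  obtain ⟨u, hu⟩ := h
  have h1 : ((u.val : (ℝ×ℝ) →L[ℝ] ℝ×ℝ) : (ℝ×ℝ) →ₗ[ℝ] ℝ×ℝ)
      * ((u.inv : (ℝ×ℝ) →L[ℝ] ℝ×ℝ) : (ℝ×ℝ) →ₗ[ℝ] ℝ×ℝ) = 1 := by
    have := u.val_inv
    rw [ContinuousLinearMap.mul_def] at this
    calc _ = (((u.val.comp u.inv : (ℝ×ℝ) →L[ℝ] ℝ×ℝ)) : (ℝ×ℝ) →ₗ[ℝ] ℝ×ℝ) := rfl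
    _ = 1 := by rw [this]; rfl
  have h2 := congrArg LinearMap.det h1
  rw [map_mul] at h2
  rw [show (1 : (ℝ×ℝ) →ₗ[ℝ] ℝ×ℝ) = LinearMap.id from rfl, LinearMap.det_id] at h2
  intro h0
  rw [← hu] at h0
  rw [h0, zero_mul] at h2
  exact zero_ne_one h2

/-- For `A(x₁,x₂) = !![x₁, 0; 0, ε x₁² + x₂³]` (`ε = ±1`), any diffeomorphism-germ `Φ` at `0`
in the isotropy group `𝒟_A` (i.e. with `A ∘ Φ = Xᵀ A X` near `0` for an
invertible-matrix-valued `X`) preserves the orientation of `ℝ²`. -/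
theorem isotropy_orientation_preserving_class10 (ε : ℝ) (hε : ε = 1 ∨ ε = -1)
    (A : ℝ × ℝ → Matrix (Fin 2) (Fin 2) ℝ)
    (hA : A = fun p => !![p.1, 0; 0, ε * p.1 ^ 2 + p.2 ^ 3])
    (Φ : ℝ × ℝ → ℝ × ℝ) (X : ℝ × ℝ → Matrix (Fin 2) (Fin 2) ℝ)
    (s : Set (ℝ × ℝ)) (hs : s ∈ nhds (0 : ℝ × ℝ))
    (hΦ : ContDiffOn ℝ (⊤ : ℕ∞) Φ s) (hΦ0 : Φ 0 = 0)
    (hdΦ : IsUnit (fderiv ℝ Φ 0))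
    (hX : ContDiffOn ℝ (⊤ : ℕ∞) X s) (hXinv : ∀ x ∈ s, IsUnit (X x))
    (heq : ∀ x ∈ s, A (Φ x) = (X x)ᵀ * A x * X x) :
    0 < LinearMap.det ((fderiv ℝ Φ 0) : (ℝ × ℝ) →ₗ[ℝ] (ℝ × ℝ)) := by
  set L := fderiv ℝ Φ 0 with hL
  -- scalar equations
  have e1 : ∀ x ∈ s, (Φ x).1 = (X x 0 0)^2 * x.1 + (X x 1 0)^2 * (ε * x.1^2 + x.2^3) := by
    intro x hx
    have h := heq x hx
    rw [hA] at h
    have := congrFun (congrFun h 0) 0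
    simp [Matrix.mul_apply, Fin.sum_univ_two, Matrix.transpose_apply] at this
    linarith [this]
  have e2 : ∀ x ∈ s, ε*(Φ x).1^2 + (Φ x).2^3
      = (X x 0 1)^2 * x.1 + (X x 1 1)^2 * (ε * x.1^2 + x.2^3) := by
    intro x hx
    have h := heq x hx
    rw [hA] at h
    have := congrFun (congrFun h 1) 1
    simp [Matrix.mul_apply, Fin.sum_univ_two, Matrix.transpose_apply] at this
    linarith [this]
  -- Φ differentiable at 0
  have hΦat : HasFDerivAt Φ L 0 :=
    ((hΦ.contDiffAt hs).differentiableAt (by simp)).hasFDerivAt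
  have hΦat' : HasFDerivAt Φ L (((0:ℝ),(0:ℝ)) : ℝ × ℝ) := hΦat
  -- derivatives along the axes
  have hc1 : HasDerivAt (fun t : ℝ => ((t, (0:ℝ)) : ℝ × ℝ)) ((1:ℝ),(0:ℝ)) 0 :=
    (hasDerivAt_id (0:ℝ)).prodMk (hasDerivAt_const (0:ℝ) (0:ℝ))
  have hc2 : HasDerivAt (fun t : ℝ => (((0:ℝ), t) : ℝ × ℝ)) ((0:ℝ),(1:ℝ)) 0 :=
    (hasDerivAt_const (0:ℝ) (0:ℝ)).prodMk (hasDerivAt_id (0:ℝ))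
  have hg1 : HasDerivAt (fun t : ℝ => Φ (t, 0)) (L (1,0)) 0 :=
    HasFDerivAt.comp_hasDerivAt (x := (0:ℝ)) (f := fun t : ℝ => ((t, (0:ℝ)) : ℝ × ℝ)) hΦat' hc1
  have hg2 : HasDerivAt (fun t : ℝ => Φ (0, t)) (L (0,1)) 0 :=
    HasFDerivAt.comp_hasDerivAt (x := (0:ℝ)) (f := fun t : ℝ => (((0:ℝ), t) : ℝ × ℝ)) hΦat' hc2
  -- component derivatives
  have hf11 : HasDerivAt (fun t : ℝ => (Φ (t, 0)).1) ((L (1,0)).1) 0 :=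
    ((ContinuousLinearMap.fst ℝ ℝ ℝ).hasFDerivAt).comp_hasDerivAt 0 hg1
  have hf12 : HasDerivAt (fun t : ℝ => (Φ (0, t)).1) ((L (0,1)).1) 0 :=
    ((ContinuousLinearMap.fst ℝ ℝ ℝ).hasFDerivAt).comp_hasDerivAt 0 hg2
  have hf22 : HasDerivAt (fun t : ℝ => (Φ (0, t)).2) ((L (0,1)).2) 0 :=
    ((ContinuousLinearMap.snd ℝ ℝ ℝ).hasFDerivAt).comp_hasDerivAt 0 hg2
  -- slope limits
  have hΦ01 : (Φ ((0:ℝ),(0:ℝ))).1 = 0 := by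
    rw [show ((0:ℝ),(0:ℝ)) = (0 : ℝ × ℝ) from rfl, hΦ0]
    rfl
  have hΦ02 : (Φ ((0:ℝ),(0:ℝ))).2 = 0 := by
    rw [show ((0:ℝ),(0:ℝ)) = (0 : ℝ × ℝ) from rfl, hΦ0]
    rfl
  have slope11 : Tendsto (fun t : ℝ => (Φ (t, 0)).1 / t) (𝓝[≠] (0:ℝ)) (𝓝 ((L (1,0)).1)) := by
    have := hasDerivAt_iff_tendsto_slope.mp hf11
    refine this.congr (fun t => ?_)
    simp [slope_def_field, hΦ0, hΦ01, hΦ02]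
  have slope12 : Tendsto (fun t : ℝ => (Φ (0, t)).1 / t) (𝓝[≠] (0:ℝ)) (𝓝 ((L (0,1)).1)) := by
    have := hasDerivAt_iff_tendsto_slope.mp hf12
    refine this.congr (fun t => ?_)
    simp [slope_def_field, hΦ0, hΦ01, hΦ02]
  have slope22 : Tendsto (fun t : ℝ => (Φ (0, t)).2 / t) (𝓝[≠] (0:ℝ)) (𝓝 ((L (0,1)).2)) := by
    have := hasDerivAt_iff_tendsto_slope.mp hf22
    refine this.congr (fun t => ?_)
    simp [slope_def_field, hΦ0, hΦ01, hΦ02]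
  -- eventual membership of the axes in s
  have hmem1 : ∀ᶠ t in 𝓝[≠] (0:ℝ), ((t, (0:ℝ)) : ℝ × ℝ) ∈ s := by
    have hc : ContinuousAt (fun t : ℝ => ((t, (0:ℝ)) : ℝ × ℝ)) 0 :=
      (continuous_id.prodMk continuous_const).continuousAt
    have := hc.preimage_mem_nhds (by exact hs)
    exact (nhdsWithin_le_nhds this : _)
  have hmem2 : ∀ᶠ t in 𝓝[≠] (0:ℝ), (((0:ℝ), t) : ℝ × ℝ) ∈ s := by
    have hc : ContinuousAt (fun t : ℝ => (((0:ℝ), t) : ℝ × ℝ)) 0 :=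
      (continuous_const.prodMk continuous_id).continuousAt
    have := hc.preimage_mem_nhds (by exact hs)
    exact (nhdsWithin_le_nhds this : _)
  -- continuity of the entries of X at 0
  have hXc : ContinuousAt X 0 := (hX.continuousOn.continuousAt hs)
  have hXc' : ContinuousAt X (((0:ℝ),(0:ℝ)) : ℝ×ℝ) := hXc
  have hent : ∀ i j : Fin 2, ContinuousAt (fun p : ℝ × ℝ => X p i j) (((0:ℝ),(0:ℝ)) : ℝ×ℝ) := by
    intro i j
    exact (((continuous_apply j).comp (continuous_apply i)).continuousAt).comp hXc'
  have hax1 : ContinuousAt (fun t : ℝ => ((t,(0:ℝ)) : ℝ×ℝ)) 0 :=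
    (continuous_id.prodMk continuous_const).continuousAt
  have hax2 : ContinuousAt (fun t : ℝ => (((0:ℝ),t) : ℝ×ℝ)) 0 :=
    (continuous_const.prodMk continuous_id).continuousAt
  have hTa : Tendsto (fun t : ℝ => X (t,0) 0 0) (𝓝[≠] (0:ℝ)) (𝓝 (X 0 0 0)) :=
    ((ContinuousAt.comp (g := fun p : ℝ×ℝ => X p 0 0) (f := fun t : ℝ => ((t,(0:ℝ)) : ℝ×ℝ)) (hent 0 0) hax1).tendsto).mono_left nhdsWithin_le_nhds
  have hTb1 : Tendsto (fun t : ℝ => X (t,0) 1 0) (𝓝[≠] (0:ℝ)) (𝓝 (X 0 1 0)) :=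
    ((ContinuousAt.comp (g := fun p : ℝ×ℝ => X p 1 0) (f := fun t : ℝ => ((t,(0:ℝ)) : ℝ×ℝ)) (hent 1 0) hax1).tendsto).mono_left nhdsWithin_le_nhds
  have hTb2 : Tendsto (fun t : ℝ => X (0,t) 1 0) (𝓝[≠] (0:ℝ)) (𝓝 (X 0 1 0)) :=
    ((ContinuousAt.comp (g := fun p : ℝ×ℝ => X p 1 0) (f := fun t : ℝ => (((0:ℝ),t) : ℝ×ℝ)) (hent 1 0) hax2).tendsto).mono_left nhdsWithin_le_nhds
  have hTd : Tendsto (fun t : ℝ => X (0,t) 1 1) (𝓝[≠] (0:ℝ)) (𝓝 (X 0 1 1)) :=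
    ((ContinuousAt.comp (g := fun p : ℝ×ℝ => X p 1 1) (f := fun t : ℝ => (((0:ℝ),t) : ℝ×ℝ)) (hent 1 1) hax2).tendsto).mono_left nhdsWithin_le_nhds
  have hTt : Tendsto (fun t : ℝ => t) (𝓝[≠] (0:ℝ)) (𝓝 0) :=
    tendsto_id.mono_left nhdsWithin_le_nhds
  -- limit 1 : (L (1,0)).1 = (X 0 0 0)^2
  have lim1 : Tendsto (fun t : ℝ => (Φ (t, 0)).1 / t) (𝓝[≠] (0:ℝ))
      (𝓝 ((X 0 0 0)^2)) := by
    have key : Tendsto (fun t : ℝ => (X (t,0) 0 0)^2 + (X (t,0) 1 0)^2 * (ε * t))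
        (𝓝[≠] (0:ℝ)) (𝓝 ((X 0 0 0)^2)) := by
      have hc : Tendsto (fun _ : ℝ => ε) (𝓝[≠] (0:ℝ)) (𝓝 ε) := tendsto_const_nhds
      have := (hTa.pow 2).add ((hTb1.pow 2).mul (hc.mul hTt))
      simpa using this
    refine key.congr' ?_
    filter_upwards [hmem1, self_mem_nhdsWithin] with t ht ht0
    have := e1 _ ht
    rw [this]
    have ht0' : (t:ℝ) ≠ 0 := ht0
    field_simp
    ring
  have E1 : (L (1,0)).1 = (X 0 0 0)^2 := tendsto_nhds_unique slope11 lim1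
  -- limit 2 : (L (0,1)).1 = 0
  have lim2 : Tendsto (fun t : ℝ => (Φ (0, t)).1 / t) (𝓝[≠] (0:ℝ)) (𝓝 0) := by
    have key : Tendsto (fun t : ℝ => (X (0,t) 1 0)^2 * t^2) (𝓝[≠] (0:ℝ)) (𝓝 0) := by
      have := (hTb2.pow 2).mul (hTt.pow 2)
      simpa using this
    refine key.congr' ?_
    filter_upwards [hmem2, self_mem_nhdsWithin] with t ht ht0
    have := e1 _ ht
    rw [this]
    have ht0' : (t:ℝ) ≠ 0 := ht0
    field_simp
    ring
  have E2 : (L (0,1)).1 = 0 := tendsto_nhds_unique slope12 lim2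
  -- limit 3 : ((L (0,1)).2)^3 = (X 0 1 1)^2
  have lim3 : Tendsto (fun t : ℝ => ((Φ (0, t)).2 / t)^3) (𝓝[≠] (0:ℝ))
      (𝓝 ((X 0 1 1)^2)) := by
    have key : Tendsto (fun t : ℝ => (X (0,t) 1 1)^2 - ε * (X (0,t) 1 0)^4 * t^3)
        (𝓝[≠] (0:ℝ)) (𝓝 ((X 0 1 1)^2)) := by
      have hc : Tendsto (fun _ : ℝ => ε) (𝓝[≠] (0:ℝ)) (𝓝 ε) := tendsto_const_nhds
      have := (hTd.pow 2).sub ((hc.mul (hTb2.pow 4)).mul (hTt.pow 3))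
      simpa using this
    refine key.congr' ?_
    filter_upwards [hmem2, self_mem_nhdsWithin] with t ht ht0
    have h1' := e1 _ ht
    have h2' := e2 _ ht
    simp only at h1' h2'
    have ht0' : (t:ℝ) ≠ 0 := ht0
    have hcube : (Φ ((0:ℝ),t)).2^3
        = (X (0,t) 1 1)^2 * t^3 - ε * ((X (0,t) 1 0)^2 * t^3)^2 := by
      have hφ1 : (Φ ((0:ℝ),t)).1 = (X (0,t) 1 0)^2 * t^3 := by
        rw [h1']; ring
      rw [hφ1] at h2'
      linear_combination h2'
    rw [div_pow, hcube]
    field_simp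
  have q3 : Tendsto (fun t : ℝ => ((Φ (0, t)).2 / t)^3) (𝓝[≠] (0:ℝ))
      (𝓝 (((L (0,1)).2)^3)) := slope22.pow 3
  have E3 : ((L (0,1)).2)^3 = (X 0 1 1)^2 := tendsto_nhds_unique q3 lim3
  -- conclude
  have hq : 0 ≤ (L (0,1)).2 := by
    have h3 : (0:ℝ) ≤ ((L (0,1)).2)^3 := by rw [E3]; positivity
    exact (Odd.pow_nonneg_iff (by decide : Odd 3)).mp h3
  have hdet : LinearMap.det (L : (ℝ×ℝ) →ₗ[ℝ] (ℝ×ℝ))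
      = (X 0 0 0)^2 * (L (0,1)).2 := by
    rw [det_prod_formula_c10]
    simp only [ContinuousLinearMap.coe_coe]
    rw [E1, E2]; ring
  have hne := det_ne_zero_c10 L hdΦ
  rw [hdet] at hne ⊢
  rcases lt_or_eq_of_le hq with h | h
  · have : (X 0 0 0)^2 ≠ 0 := by
      intro h0
      rw [h0, zero_mul] at hne
      exact hne rfl
    positivity
  · rw [← h, mul_zero] at hne
    exact absurd rfl hne
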